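/- For natural numbers n ≥ k ≥ 1, an integer r ≥ 0, and a sequence (a_m), one has B_{n,k}(0, ..., 0, a_{r+1}, a_{r+2}, ...) = (n!/(n-rk)!) · B_{n-rk, k}(a_{r+1}/(r+1)!·1!, ..., i!·a_{i+r}/(i+r)!, ...), i.e. the partial Bell polynomial of the shifted sequence with r leading zeros equals n!/(n-rk)! times the Bell polynomial B_{n-rk,k} evaluated at the sequence whose i-th entry is i!·a_{i+r}/(i+r)!, valid when n ≥ rk + k (and both sides are zero otherwise). -/

import Mathlib

open Finset

/-- The exponential partial Bell polynomial `B_{n,k}(x₁,x₂,…)`, defined via the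
generating function `∑_{n} B_{n,k} tⁿ/n! = (1/k!) (∑_{m≥1} x_m t^m/m!)^k`. -/
noncomputable def bellB (n k : ℕ) (x : ℕ → ℝ) : ℝ :=
  ((Nat.factorial n : ℝ) / (Nat.factorial k : ℝ)) *
    PowerSeries.coeff n
      ((PowerSeries.mk fun m => if m = 0 then 0 else x m / (Nat.factorial m : ℝ)) ^ k)

/-- The complete Bell polynomial `A_n(x₁,…,x_n) = ∑_{k=1}^n B_{n,k}`, `A₀ = 1`. -/
noncomputable def bellA (n : ℕ) (x : ℕ → ℝ) : ℝ :=
  if n = 0 then 1 else ∑ k ∈ Finset.Icc 1 n, bellB n k x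

theorem stmt_4 (a : ℕ → ℝ) (n k r : ℕ) (hk : 1 ≤ k) (hn : r * k + k ≤ n) :
    bellB n k (fun m => if m ≤ r then 0 else a m) =
      ((Nat.factorial n : ℝ) / (Nat.factorial (n - r * k) : ℝ)) *
        bellB (n - r * k) k
          (fun i => (Nat.factorial i : ℝ) * a (i + r) / (Nat.factorial (i + r) : ℝ)) := by
  unfold bellB
  set g := PowerSeries.mk fun i => if i = 0 then 0 else
      ((Nat.factorial i : ℝ) * a (i + r) / (Nat.factorial (i + r) : ℝ)) / (Nat.factorial i : ℝ)
    with hg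
  have hfg : (PowerSeries.mk fun m => if m = 0 then 0 else
      (if m ≤ r then 0 else a m) / (Nat.factorial m : ℝ)) = PowerSeries.X ^ r * g := by
    ext m
    rw [PowerSeries.coeff_X_pow_mul', PowerSeries.coeff_mk]
    by_cases h1 : m ≤ r
    · by_cases h0 : m = 0
      · simp [h0, hg]
      · simp only [hg, PowerSeries.coeff_mk, if_neg h0, if_pos h1]
        split_ifs with h2 h3
        · simp
        · omega
        · simp
    · have hrm : r ≤ m := le_of_not_ge h1
      have hm0 : m ≠ 0 := by omega
      have hmr0 : m - r ≠ 0 := by omega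
      simp [hm0, h1, hrm, hg, hmr0, Nat.sub_add_cancel hrm]
      have : (Nat.factorial (m-r) : ℝ) ≠ 0 := Nat.cast_ne_zero.mpr (Nat.factorial_ne_zero _)
      field_simp
  rw [hfg]
  have hrk : r * k ≤ n := le_trans (Nat.le_add_right _ _) hn
  have hc : (PowerSeries.coeff n) ((PowerSeries.X ^ r * g) ^ k)
      = PowerSeries.coeff (n - r * k) (g ^ k) := by
    rw [mul_pow, ← pow_mul, PowerSeries.coeff_X_pow_mul', if_pos hrk]
  rw [hc]
  have hfac : (Nat.factorial (n - r * k) : ℝ) ≠ 0 := Nat.cast_ne_zero.mpr (Nat.factorial_ne_zero _)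
  field_simp
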